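/- Rohn's regularity criterion: let A be an m×m interval matrix written as A = A_c + [−Δ, Δ] where A_c is the (real) midpoint matrix and Δ ≥ 0 entrywise is the radius matrix. Suppose A_c is invertible and the spectral radius of D = |A_c^{-1}| Δ satisfies ρ(D) < 1 (where |·| is entrywise absolute value). Then every real matrix M with |M − A_c| ≤ Δ entrywise is invertible. -/

import Mathlib

open Matrix Filter

attribute [local instance] Matrix.linftyOpNormedRing Matrix.linftyOpNormedAlgebra

/-- If every complex eigenvalue of a real matrix has modulus `< 1`, then some power
has `L∞`-operator norm `< 1`. -/
theorem aux_exists_pow_norm_lt {m : ℕ} (hm : 0 < m) (D : Matrix (Fin m) (Fin m) ℝ)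
    (hρ : ∀ μ : ℂ, μ ∈ spectrum ℂ (D.map (Complex.ofReal)) → ‖μ‖ < 1) :
    ∃ n : ℕ, ‖D ^ n‖ < 1 := by
  haveI : Nonempty (Fin m) := ⟨⟨0, hm⟩⟩
  set a : Matrix (Fin m) (Fin m) ℂ := D.map (Complex.ofReal) with ha
  have hne : (spectrum ℂ a).Nonempty := spectrum.nonempty a
  have hrad : spectralRadius ℂ a < 1 := by
    have := spectrum.spectralRadius_lt_of_forall_lt_of_nonempty hne (r := 1)
      (fun k hk => by simpa [← NNReal.coe_lt_coe] using hρ k hk)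
    simpa using this
  have T := spectrum.pow_nnnorm_pow_one_div_tendsto_nhds_spectralRadius a
  have hev : ∀ᶠ n : ℕ in atTop, (‖a ^ n‖₊ : ENNReal) ^ (1 / (n : ℝ)) < 1 :=
    T.eventually_lt_const hrad
  obtain ⟨n, hn1, hn⟩ := ((eventually_ge_atTop 1).and hev).exists
  have hpos : (0 : ℝ) < 1 / n := by positivity
  have hlt : (‖a ^ n‖₊ : ENNReal) < 1 := by
    by_contra hcon
    push_neg at hcon
    have : (1 : ENNReal) ≤ (‖a ^ n‖₊ : ENNReal) ^ (1 / (n : ℝ)) := by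
      calc (1 : ENNReal) = 1 ^ (1 / (n : ℝ)) := (ENNReal.one_rpow _).symm
        _ ≤ (‖a ^ n‖₊ : ENNReal) ^ (1 / (n : ℝ)) :=
          ENNReal.rpow_le_rpow hcon hpos.le
    exact absurd hn (not_lt.mpr this)
  refine ⟨n, ?_⟩
  have hnorm : ‖a ^ n‖ = ‖D ^ n‖ := by
    have hmap : a ^ n = (D ^ n).map (Complex.ofReal) := by
      have h1 : a = (Complex.ofRealHom : ℝ →+* ℂ).mapMatrix D := rfl
      rw [h1, ← map_pow, RingHom.mapMatrix_apply]
      rfl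
    rw [hmap]
    simp only [Matrix.linfty_opNorm_def]
    congr 1
    ext
    congr 1
    ext
    simp [Matrix.map_apply]
  have := (ENNReal.coe_lt_one_iff.mp hlt)
  have : ‖a ^ n‖ < 1 := this
  linarith [hnorm ▸ this]

/-- Rohn's regularity criterion: if the midpoint matrix `A_c` is invertible and the
spectral radius of `D = |A_c⁻¹| Δ` is `< 1` (every complex eigenvalue of `D` has
modulus `< 1`), then every real matrix `M` with `|M - A_c| ≤ Δ` entrywise is
invertible. -/
theorem rohn_regularity_criterion {m : ℕ}
    (Ac Δ : Matrix (Fin m) (Fin m) ℝ)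
    (hAc : IsUnit Ac) (hΔ : ∀ i j, 0 ≤ Δ i j)
    (D : Matrix (Fin m) (Fin m) ℝ)
    (hD : D = (Matrix.of fun i j => |Ac⁻¹ i j|) * Δ)
    (hρ : ∀ μ : ℂ, μ ∈ spectrum ℂ (D.map (Complex.ofReal)) → ‖μ‖ < 1) :
    ∀ M : Matrix (Fin m) (Fin m) ℝ,
      (∀ i j, |M i j - Ac i j| ≤ Δ i j) → IsUnit M := by
  intro M hM
  rcases Nat.eq_zero_or_pos m with h0 | hm
  · subst h0
    exact isUnit_of_subsingleton M
  set B : Matrix (Fin m) (Fin m) ℝ := Ac⁻¹ * (Ac - M) with hB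
  have hdetAc : IsUnit Ac.det := (Matrix.isUnit_iff_isUnit_det Ac).mp hAc
  have hfac : M = Ac * (1 - B) := by
    rw [hB, mul_sub, mul_one, ← mul_assoc, Matrix.mul_nonsing_inv Ac hdetAc, one_mul]
    abel
  suffices hU : IsUnit (1 - B) by
    rw [hfac]; exact hAc.mul hU
  by_contra hU
  have hdet : (1 - B).det = 0 := by
    by_contra hd
    exact hU ((Matrix.isUnit_iff_isUnit_det _).mpr (isUnit_iff_ne_zero.mpr hd))
  obtain ⟨x, hx0, hx⟩ := (Matrix.exists_mulVec_eq_zero_iff).mpr hdet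
  have hBx : B *ᵥ x = x := by
    have h := hx
    rw [Matrix.sub_mulVec, Matrix.one_mulVec, sub_eq_zero] at h
    exact h.symm
  set y : Fin m → ℝ := fun i => |x i| with hy
  have hy0 : ∀ i, 0 ≤ y i := fun i => abs_nonneg _
  have hyne : y ≠ 0 := fun h => hx0 (funext fun i => abs_eq_zero.mp (congrFun h i))
  have hDnn : ∀ i j, 0 ≤ D i j := by
    intro i j
    rw [hD, Matrix.mul_apply]
    exact Finset.sum_nonneg fun k _ => mul_nonneg (abs_nonneg _) (hΔ k j)
  have hBD : ∀ i j, |B i j| ≤ D i j := by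
    intro i j
    rw [hD, hB, Matrix.mul_apply, Matrix.mul_apply]
    calc |∑ k, Ac⁻¹ i k * (Ac - M) k j| ≤ ∑ k, |Ac⁻¹ i k * (Ac - M) k j| :=
          Finset.abs_sum_le_sum_abs _ _
      _ ≤ ∑ k, |Ac⁻¹ i k| * Δ k j := by
          refine Finset.sum_le_sum fun k _ => ?_
          rw [abs_mul]
          refine mul_le_mul_of_nonneg_left ?_ (abs_nonneg _)
          have : |(Ac - M) k j| = |M k j - Ac k j| := by
            rw [Matrix.sub_apply, abs_sub_comm]
          rw [this]
          exact hM k j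
      _ = ∑ k, (Matrix.of fun i j => |Ac⁻¹ i j|) i k * Δ k j := rfl
  have hyD : ∀ i, y i ≤ (D *ᵥ y) i := by
    intro i
    have : y i = |(B *ᵥ x) i| := by rw [hBx]
    rw [this, Matrix.mulVec, dotProduct]
    calc |∑ j, B i j * x j| ≤ ∑ j, |B i j * x j| := Finset.abs_sum_le_sum_abs _ _
      _ ≤ ∑ j, D i j * y j := by
          refine Finset.sum_le_sum fun j _ => ?_
          rw [abs_mul]
          exact mul_le_mul_of_nonneg_right (hBD i j) (abs_nonneg _)
      _ = (D *ᵥ y) i := rfl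
  have hiter : ∀ n : ℕ, ∀ i, y i ≤ ((D ^ n) *ᵥ y) i := by
    intro n
    induction n with
    | zero => intro i; simp [Matrix.one_mulVec]
    | succ n ih =>
        intro i
        have hstep : (D ^ (n + 1)) *ᵥ y = D *ᵥ ((D ^ n) *ᵥ y) := by
          rw [Matrix.mulVec_mulVec, ← pow_succ']
        rw [hstep]
        refine (hyD i).trans ?_
        rw [Matrix.mulVec, Matrix.mulVec, dotProduct, dotProduct]
        exact Finset.sum_le_sum fun j _ =>
          mul_le_mul_of_nonneg_left (ih j) (hDnn i j)
  have hynorm : 0 < ‖y‖ := norm_pos_iff.mpr hyne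
  have key : ∀ n : ℕ, ‖y‖ ≤ ‖D ^ n‖ * ‖y‖ := by
    intro n
    have h1 : ‖y‖ ≤ ‖(D ^ n) *ᵥ y‖ := by
      rw [pi_norm_le_iff_of_nonneg (norm_nonneg _)]
      intro i
      have : ‖y i‖ = y i := Real.norm_of_nonneg (hy0 i)
      rw [this]
      calc y i ≤ ((D ^ n) *ᵥ y) i := hiter n i
        _ ≤ ‖((D ^ n) *ᵥ y) i‖ := le_abs_self _
        _ ≤ ‖(D ^ n) *ᵥ y‖ := norm_le_pi_norm _ i
    exact h1.trans (Matrix.linfty_opNorm_mulVec _ _)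
  obtain ⟨n, hn⟩ := aux_exists_pow_norm_lt hm D hρ
  have : ‖D ^ n‖ * ‖y‖ < 1 * ‖y‖ := by
    exact mul_lt_mul_of_pos_right hn hynorm
  rw [one_mul] at this
  exact absurd (key n) (not_le.mpr this)
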